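/- Let E be a real inner product space and V̄ : E → E a differentiable vector field. Define V(y) = V̄(y) − ⟪V̄(y), y⟫·y. Then for every x ∈ E with ‖x‖ = 1 and all u, v ∈ E with ⟪u, x⟫ = ⟪v, x⟫ = 0: [⟪DV̄(x)u, v⟫ + ⟪DV̄(x)v, u⟫] − [⟪DV(x)u, v⟫ + ⟪DV(x)v, u⟫] = 2⟪V̄(x), x⟫·⟪u, v⟫, where D denotes the Fréchet derivative. (This is Lemma 3.1 of the paper, 𝓛_{V̄} ḡ − 𝓛_V g = −2ε_N C 𝒜, for the unit sphere, whose outward unit normal at x is x and whose Weingarten operator is 𝒜u = −u.) -/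

import Mathlib

open scoped RealInnerProductSpace

/-- Lemma 3.1 of the paper for the unit sphere: `𝓛_{V̄} ḡ − 𝓛_V g = 2C⟪·,·⟫` on
tangent vectors, where `C(x) = ⟪V̄(x), x⟫` and `V` is the tangential part of `V̄`. -/
theorem lie_derivative_tangential_part_sphere {E : Type*} [NormedAddCommGroup E]
    [InnerProductSpace ℝ E]
    (Vbar : E → E) (hVbar : Differentiable ℝ Vbar)
    (V : E → E) (hV : ∀ y, V y = Vbar y - ⟪Vbar y, y⟫ • y) :
    ∀ x u v : E, ‖x‖ = 1 → ⟪u, x⟫ = 0 → ⟪v, x⟫ = 0 →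
      (⟪fderiv ℝ Vbar x u, v⟫ + ⟪fderiv ℝ Vbar x v, u⟫)
        - (⟪fderiv ℝ V x u, v⟫ + ⟪fderiv ℝ V x v, u⟫)
        = 2 * ⟪Vbar x, x⟫ * ⟪u, v⟫ := by
  intro x u v hx hu hv
  have hVfun : V = fun y => Vbar y - ⟪Vbar y, y⟫ • y := funext hV
  have h1 : HasFDerivAt Vbar (fderiv ℝ Vbar x) x := (hVbar x).hasFDerivAt
  have h2 := (h1.inner ℝ (hasFDerivAt_id x)).smul (hasFDerivAt_id x)
  have h4 : HasFDerivAt V _ x := hVfun ▸ (show HasFDerivAt (fun y => Vbar y - ⟪Vbar y, y⟫ • y) _ x from h1.sub h2)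
  have key : ∀ w : E, fderiv ℝ V x w =
      fderiv ℝ Vbar x w - ((⟪fderiv ℝ Vbar x w, x⟫ + ⟪Vbar x, w⟫) • x
        + ⟪Vbar x, x⟫ • w) := by
    intro w
    rw [h4.fderiv]
    simp [fderivInnerCLM_apply, real_inner_comm x (Vbar x), add_smul]
    abel
  have hxu : ⟪x, u⟫ = 0 := by rw [real_inner_comm]; exact hu
  have hxv : ⟪x, v⟫ = 0 := by rw [real_inner_comm]; exact hv
  rw [key u, key v]
  simp [inner_sub_left, inner_add_left, inner_smul_left, hxu, hxv,
    real_inner_comm v u]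
  ring
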